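/- For every angle θ' ∈ [0, π], the inequality √(1 − 2 cos(θ'/2) cos(θ') + cos²(θ'/2)) ≤ 2 sin(θ'/2) holds. -/
import Mathlib

theorem trig_ineq (θ : ℝ) (h0 : 0 ≤ θ) (hπ : θ ≤ Real.pi) :
    Real.sqrt (1 - 2 * Real.cos (θ / 2) * Real.cos θ + Real.cos (θ / 2) ^ 2) ≤
      2 * Real.sin (θ / 2) := by
  have hs : 0 ≤ Real.sin (θ / 2) := Real.sin_nonneg_of_nonneg_of_le_pi (by linarith) (by linarith [Real.pi_pos])
  have hc : 0 ≤ Real.cos (θ / 2) := Real.cos_nonneg_of_mem_Icc ⟨by linarith [Real.pi_pos], by linarith⟩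
  have hc1 : Real.cos (θ / 2) ≤ 1 := Real.cos_le_one _
  have hcos : Real.cos θ = 2 * Real.cos (θ / 2) ^ 2 - 1 := by
    have := Real.cos_two_mul (θ / 2)
    rw [show 2 * (θ / 2) = θ by ring] at this
    linarith
  have hsq : Real.sin (θ / 2) ^ 2 = 1 - Real.cos (θ / 2) ^ 2 := by
    have := Real.sin_sq_add_cos_sq (θ / 2); linarith
  have key : 1 - 2 * Real.cos (θ / 2) * Real.cos θ + Real.cos (θ / 2) ^ 2 ≤ (2 * Real.sin (θ / 2)) ^ 2 := by
    rw [hcos]; nlinarith [sq_nonneg (1 - Real.cos (θ / 2))]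
  calc Real.sqrt (1 - 2 * Real.cos (θ / 2) * Real.cos θ + Real.cos (θ / 2) ^ 2)
      ≤ Real.sqrt ((2 * Real.sin (θ / 2)) ^ 2) := Real.sqrt_le_sqrt key
    _ = 2 * Real.sin (θ / 2) := Real.sqrt_sq (by linarith)
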